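/- Let T be a finite tree on n ≥ 2 vertices with vertex 0 as root and nonzero susceptances. Then the set of real solutions to the lossless zero-injection power flow equations on T consists exactly of the 2^{n−1} trivial solutions, i.e., points with y_k = 0 and x_k ∈ {−1, 1} for k = 1,…,n−1. -/

import Mathlib

open Finset

/-- An antisymmetric flow supported on edges of a tree with zero divergence
at every vertex is identically zero. -/
lemma flow_zero_aux {V : Type*} [Fintype V] {G : SimpleGraph V}
    (hT : G.IsTree) (F : V → V → ℝ)
    (hanti : ∀ k m, F k m = - F m k)
    (hsupp : ∀ k m, ¬ G.Adj k m → F k m = 0)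
    (hdiv : ∀ k, ∑ m, F k m = 0) : ∀ u v, F u v = 0 := by
  classical
  intro u v
  by_cases hadj : G.Adj u v
  swap
  · exact hsupp u v hadj
  have hbridge : G.IsBridge s(u, v) :=
    (SimpleGraph.isAcyclic_iff_forall_adj_isBridge.mp hT.2) hadj
  set G' := G \ SimpleGraph.fromEdgeSet {s(u, v)} with hG'
  have hnotreach : ¬ G'.Reachable u v := SimpleGraph.isBridge_iff.mp hbridge
  set C : Finset V := Finset.univ.filter (fun k => G'.Reachable u k) with hC
  have huC : u ∈ C := Finset.mem_filter.mpr ⟨Finset.mem_univ u, SimpleGraph.Reachable.refl u⟩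
  have hvC : v ∉ C := by
    intro hv
    exact hnotreach (Finset.mem_filter.mp hv).2
  have h1 : ∑ k ∈ C, ∑ m, F k m = 0 := Finset.sum_eq_zero (fun k _ => hdiv k)
  have h2 : ∑ k ∈ C, ∑ m ∈ C, F k m = 0 := by
    have hcomm : ∑ k ∈ C, ∑ m ∈ C, F m k = ∑ k ∈ C, ∑ m ∈ C, F k m :=
      Finset.sum_comm
    have hneg : (∑ k ∈ C, ∑ m ∈ C, F k m) = - ∑ k ∈ C, ∑ m ∈ C, F k m := by
      calc ∑ k ∈ C, ∑ m ∈ C, F k m = ∑ k ∈ C, ∑ m ∈ C, (- F m k) := by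
            refine Finset.sum_congr rfl fun k _ => Finset.sum_congr rfl fun m _ => ?_
            exact hanti k m
        _ = - ∑ k ∈ C, ∑ m ∈ C, F m k := by
            simp [Finset.sum_neg_distrib]
        _ = - ∑ k ∈ C, ∑ m ∈ C, F k m := by rw [hcomm]
    linarith
  have h3 : ∑ k ∈ C, ∑ m ∈ Cᶜ, F k m = 0 := by
    have : ∀ k, ∑ m, F k m = ∑ m ∈ C, F k m + ∑ m ∈ Cᶜ, F k m := by
      intro k; rw [Finset.sum_add_sum_compl]
    rw [Finset.sum_congr rfl (fun k _ => this k), Finset.sum_add_distrib, h2,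
      zero_add] at h1
    exact h1
  have h4 : ∑ k ∈ C, ∑ m ∈ Cᶜ, F k m = F u v := by
    rw [← Finset.sum_product']
    apply Finset.sum_eq_single_of_mem (u, v)
    · exact Finset.mem_product.mpr ⟨huC, Finset.mem_compl.mpr hvC⟩
    · rintro ⟨k, m⟩ hkm hne
      obtain ⟨hkC, hmC⟩ := Finset.mem_product.mp hkm
      rw [Finset.mem_compl] at hmC
      by_cases hadj2 : G.Adj k m
      swap
      · exact hsupp k m hadj2
      by_cases heq : s(k, m) = s(u, v)
      · rw [Sym2.eq_iff] at heq
        rcases heq with ⟨rfl, rfl⟩ | ⟨rfl, rfl⟩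
        · exact absurd rfl hne
        · exact absurd hkC hvC
      · exfalso
        have hG'adj : G'.Adj k m := by
          rw [hG', SimpleGraph.sdiff_adj]
          refine ⟨hadj2, ?_⟩
          rw [SimpleGraph.fromEdgeSet_adj]
          rintro ⟨h, -⟩
          exact heq (by simpa using h)
        have hreach : G'.Reachable u k := (Finset.mem_filter.mp hkC).2
        exact hmC (Finset.mem_filter.mpr
          ⟨Finset.mem_univ m, hreach.trans hG'adj.reachable⟩)
  rw [h4] at h3
  exact h3

theorem stmt_14 (n : ℕ) (hn : 2 ≤ n) (G : SimpleGraph (Fin n)) (hT : G.IsTree)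
    (b : Fin n → Fin n → ℝ) (hsym : ∀ k m, b k m = b m k)
    (hbne : ∀ k m, G.Adj k m → b k m ≠ 0)
    (hb0 : ∀ k m, ¬ G.Adj k m → b k m = 0) :
    (∀ x y : Fin n → ℝ, x ⟨0, by omega⟩ = 1 → y ⟨0, by omega⟩ = 0 →
      ((∀ k, k ≠ (⟨0, by omega⟩ : Fin n) →
          x k ^ 2 + y k ^ 2 = 1 ∧
          ∑ m ∈ Finset.univ, b k m * (x k * y m - x m * y k) = 0)
        ↔ (∀ k, k ≠ (⟨0, by omega⟩ : Fin n) → y k = 0 ∧ (x k = 1 ∨ x k = -1))))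
    ∧ Nat.card {p : (Fin n → ℝ) × (Fin n → ℝ) //
        p.1 ⟨0, by omega⟩ = 1 ∧ p.2 ⟨0, by omega⟩ = 0 ∧
        ∀ k, k ≠ (⟨0, by omega⟩ : Fin n) →
          p.1 k ^ 2 + p.2 k ^ 2 = 1 ∧
          ∑ m ∈ Finset.univ, b k m * (p.1 k * p.2 m - p.1 m * p.2 k) = 0} =
      2 ^ (n - 1) := by
  classical
  set r : Fin n := ⟨0, by omega⟩ with hr
  clear_value r
  -- hard direction
  have main : ∀ x y : Fin n → ℝ, x r = 1 → y r = 0 →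
      (∀ k, k ≠ r → x k ^ 2 + y k ^ 2 = 1 ∧
        ∑ m ∈ Finset.univ, b k m * (x k * y m - x m * y k) = 0) →
      ∀ k, y k = 0 ∧ (x k = 1 ∨ x k = -1) := by
    intro x y hx hy h
    set F : Fin n → Fin n → ℝ := fun k m => b k m * (x k * y m - x m * y k) with hF
    have hanti : ∀ k m, F k m = - F m k := by
      intro k m; simp only [hF]; rw [hsym k m]; ring
    have hsupp : ∀ k m, ¬ G.Adj k m → F k m = 0 := by
      intro k m hadj; simp only [hF]; rw [hb0 k m hadj]; ring
    have hdiv : ∀ k, ∑ m, F k m = 0 := by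
      intro k
      by_cases hk : k = r
      swap
      · exact (h k hk).2
      rw [hk]
      -- total sum is zero by antisymmetry
      have htot : ∑ l, ∑ m, F l m = 0 := by
        have hcomm : ∑ l, ∑ m, F m l = ∑ l, ∑ m, F l m :=
          Finset.sum_comm
        have hneg : (∑ l, ∑ m, F l m) = - ∑ l, ∑ m, F l m := by
          calc ∑ l, ∑ m, F l m = ∑ l, ∑ m, (- F m l) := by
                refine Finset.sum_congr rfl fun l _ => Finset.sum_congr rfl fun m _ => ?_
                exact hanti l m
            _ = - ∑ l, ∑ m, F m l := by simp [Finset.sum_neg_distrib]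
            _ = - ∑ l, ∑ m, F l m := by rw [hcomm]
        linarith
      have hsplit : ∑ l ∈ Finset.univ.erase r, (∑ m, F l m) + (∑ m, F r m)
          = ∑ l, ∑ m, F l m :=
        Finset.sum_erase_add _ _ (Finset.mem_univ r)
      have hrest : ∑ l ∈ Finset.univ.erase r, (∑ m, F l m) = 0 := by
        refine Finset.sum_eq_zero fun l hl => ?_
        exact (h l (Finset.ne_of_mem_erase hl)).2
      rw [hrest, zero_add, htot] at hsplit
      exact hsplit
    have hflow : ∀ u v, F u v = 0 := flow_zero_aux hT F hanti hsupp hdiv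
    -- propagate from the root
    have key : ∀ (a c : Fin n) (w : G.Walk a c),
        (y c = 0 ∧ (x c = 1 ∨ x c = -1)) → (y a = 0 ∧ (x a = 1 ∨ x a = -1)) := by
      intro a c w
      induction w with
      | nil => exact id
      | @cons a c d hadj p ih =>
      intro hd
      obtain ⟨hyc, hxc⟩ := ih hd
      have hxc0 : x c ≠ 0 := by rcases hxc with h1 | h1 <;> rw [h1] <;> norm_num
      have hf : x a * y c - x c * y a = 0 := by
        have := hflow a c
        simp only [hF] at this
        rcases mul_eq_zero.mp this with h1 | h1
        · exact absurd h1 (hbne a c hadj)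
        · exact h1
      have hya : y a = 0 := by
        rw [hyc] at hf
        have : x c * y a = 0 := by linarith
        rcases mul_eq_zero.mp this with h1 | h1
        · exact absurd h1 hxc0
        · exact h1
      refine ⟨hya, ?_⟩
      by_cases ha : a = r
      · rw [ha]; exact Or.inl hx
      · have hsq : x a ^ 2 + y a ^ 2 = 1 := (h a ha).1
        rw [hya] at hsq
        have : (x a - 1) * (x a + 1) = 0 := by nlinarith
        rcases mul_eq_zero.mp this with h1 | h1
        · left; linarith
        · right; linarith
    intro k
    obtain ⟨w⟩ := hT.1.preconnected k r
    exact key k r w ⟨hy, Or.inl hx⟩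
  -- easy direction
  have easy : ∀ x y : Fin n → ℝ, x r = 1 → y r = 0 →
      (∀ k, k ≠ r → y k = 0 ∧ (x k = 1 ∨ x k = -1)) →
      ∀ k, k ≠ r → x k ^ 2 + y k ^ 2 = 1 ∧
        ∑ m ∈ Finset.univ, b k m * (x k * y m - x m * y k) = 0 := by
    intro x y hx hy h k hk
    have hyall : ∀ m, y m = 0 := by
      intro m
      by_cases hm : m = r
      · subst hm; exact hy
      · exact (h m hm).1
    constructor
    · rw [hyall k]
      rcases (h k hk).2 with h1 | h1 <;> rw [h1] <;> norm_num
    · refine Finset.sum_eq_zero fun m _ => ?_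
      rw [hyall k, hyall m]; ring
  refine ⟨?_, ?_⟩
  · intro x y hx hy
    constructor
    · intro hsol k hk
      exact main x y hx hy hsol k
    · intro hsol
      exact easy x y hx hy hsol
  · -- counting
    have e : {p : (Fin n → ℝ) × (Fin n → ℝ) //
        p.1 r = 1 ∧ p.2 r = 0 ∧
        ∀ k, k ≠ r →
          p.1 k ^ 2 + p.2 k ^ 2 = 1 ∧
          ∑ m ∈ Finset.univ, b k m * (p.1 k * p.2 m - p.1 m * p.2 k) = 0}
        ≃ ({k : Fin n // k ≠ r} → Bool) := by
      refine
        { toFun := fun p k => decide (p.1.1 k.1 = 1)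
          invFun := fun f =>
            ⟨((fun k => if h : k = r then 1 else if f ⟨k, h⟩ then 1 else -1),
              fun _ => 0), ?_, rfl, ?_⟩
          left_inv := ?_
          right_inv := ?_ }
      · simp
      · intro k hk
        refine ⟨?_, ?_⟩
        · simp only [dif_neg hk]
          by_cases hf : (fun k => if h : k = r then (1:ℝ) else if f ⟨k, h⟩ then 1 else -1) k = 1
          · by_cases hfk : f ⟨k, hk⟩ <;> simp [hfk] <;> norm_num
          · by_cases hfk : f ⟨k, hk⟩ <;> simp [hfk] <;> norm_num
        · exact Finset.sum_eq_zero fun m _ => by ring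
      · rintro ⟨⟨x, y⟩, hp1, hp2, hp3⟩
        have hall := main x y hp1 hp2 hp3
        refine Subtype.ext (Prod.ext ?_ ?_)
        · funext k
          simp only
          by_cases hk : k = r
          · subst hk
            rw [dif_pos rfl]
            exact hp1.symm
          · rw [dif_neg hk]
            rcases (hall k).2 with h1 | h1
            · simp [h1]
            · have hne : ¬ ((x, y).1 k = 1) := by
                intro hcc
                rw [show (x, y).1 k = x k from rfl, h1] at hcc
                norm_num at hcc
              rw [if_neg (by simpa using hne)]
              exact h1.symm
        · funext k
          simp only
          exact ((hall k).1).symm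
      · intro f
        funext k
        simp only [dif_neg k.2, Subtype.coe_eta]
        by_cases hfk : f k <;> simp [hfk] <;> norm_num
    rw [Nat.card_congr e, Nat.card_fun, Nat.card_eq_fintype_card (α := Bool),
      Nat.card_eq_fintype_card, Fintype.card_bool, Fintype.card_subtype_compl]
    congr 1
    rw [Fintype.card_subtype_eq, Fintype.card_fin]
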